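/- Let D = (A,B,λ) be a temporal bi-clique with injective labeling λ and let e ∈ A⊗B. Then there exists a set F ⊆ A⊗B with |F| ≤ |In(e)| + |Out(e)| − 3 such that every vertex in In(e) reaches every vertex in Out(e) via a temporal path contained in F. -/

import Mathlib

/-!
Formalization framework for temporal graphs, temporal paths, spanners,
bi-spanners, and related notions from the paper on temporal spanners of
temporal cliques and bi-cliques.

A temporal graph on vertex type `V` is given by a labeling `lab : Sym2 V → L`
(only values on actual edges matter) together with an edge set
`E : Set (Sym2 V)`.  A temporal path is a nonempty list of vertices whose
consecutive pairs are edges of the allowed edge set and whose labels are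
non-decreasing along the path (non-strict temporal path).
-/

namespace TS

variable {V : Type} {L : Type} [LinearOrder L]

/-- The list of (undirected) edges traversed by a list of vertices. -/
def pathEdges (p : List V) : List (Sym2 V) :=
  (p.zip p.tail).map fun q => s(q.1, q.2)

/-- `p` is a temporal path using only edges from `S`, labelled by `lab`:
nonempty, all edges in `S`, labels non-decreasing along the path. -/
def IsTemporalPath (lab : Sym2 V → L) (S : Set (Sym2 V)) (p : List V) : Prop :=
  p ≠ [] ∧ (∀ e ∈ pathEdges p, e ∈ S) ∧
    (pathEdges p).Chain' fun e f => lab e ≤ lab f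

/-- `u` reaches `v` via a temporal path contained in `S`. -/
def Reaches (lab : Sym2 V → L) (S : Set (Sym2 V)) (u v : V) : Prop :=
  ∃ p : List V, p.head? = some u ∧ p.getLast? = some v ∧ IsTemporalPath lab S p

/-- Edge set of the complete graph on `V`. -/
def cliqueEdges (V : Type) : Set (Sym2 V) := {e | ¬ e.IsDiag}

/-- Edge set `A ⊗ B` of the complete bipartite graph with parts `α` and `β`. -/
def bicliqueEdges (α β : Type) : Set (Sym2 (α ⊕ β)) :=
  {e | ∃ a b, e = s(Sum.inl a, Sum.inr b)}

/-- `S` is a spanner of the temporal graph with edge set `E`: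
`S ⊆ E` and every vertex reaches every other vertex within `S`. -/
def IsSpanner (lab : Sym2 V → L) (E S : Set (Sym2 V)) : Prop :=
  S ⊆ E ∧ ∀ u v : V, Reaches lab S u v

/-- `S` is a bi-spanner of the temporal bi-clique with parts `α`, `β`:
`S ⊆ α ⊗ β` and every `a ∈ α` reaches every `b ∈ β` within `S`. -/
def IsBiSpanner {α β : Type} (lab : Sym2 (α ⊕ β) → L) (S : Set (Sym2 (α ⊕ β))) : Prop :=
  S ⊆ bicliqueEdges α β ∧ ∀ (a : α) (b : β), Reaches lab S (Sum.inl a) (Sum.inr b)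

/-- `σ_cl n`: the minimum number `m` such that every temporal clique on `n`
vertices admits a spanner with at most `m` edges. -/
noncomputable def sigmaCl (n : ℕ) : ℕ :=
  sInf {m | ∀ lab : Sym2 (Fin n) → ℕ, ∃ S : Finset (Sym2 (Fin n)),
    IsSpanner lab (cliqueEdges (Fin n)) (↑S) ∧ S.card ≤ m}

/-- `σ_bc n`: the minimum number `m` such that every temporal bi-clique with
`n` vertices on each side admits a bi-spanner with at most `m` edges. -/
noncomputable def sigmaBc (n : ℕ) : ℕ :=
  sInf {m | ∀ lab : Sym2 (Fin n ⊕ Fin n) → ℕ, ∃ S : Finset (Sym2 (Fin n ⊕ Fin n)),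
    IsBiSpanner lab (↑S) ∧ S.card ≤ m}

/-- `In(v,t)`: vertices reaching `v` via a temporal path (in edge set `E`)
all of whose labels are at most `t`. -/
def InSet (lab : Sym2 V → L) (E : Set (Sym2 V)) (v : V) (t : L) : Set V :=
  {u | ∃ p : List V, p.head? = some u ∧ p.getLast? = some v ∧
    IsTemporalPath lab E p ∧ ∀ e ∈ pathEdges p, lab e ≤ t}

/-- `Out(v,t)`: vertices that `v` reaches via a temporal path (in edge set `E`)
all of whose labels are at least `t`. -/
def OutSet (lab : Sym2 V → L) (E : Set (Sym2 V)) (v : V) (t : L) : Set V :=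
  {w | ∃ p : List V, p.head? = some v ∧ p.getLast? = some w ∧
    IsTemporalPath lab E p ∧ ∀ e ∈ pathEdges p, t ≤ lab e}

/-- `In(e)` for the edge `e = {u,v}`. -/
def InEdge (lab : Sym2 V → L) (E : Set (Sym2 V)) (u v : V) : Set V :=
  InSet lab E u (lab s(u, v)) ∪ InSet lab E v (lab s(u, v))

/-- `Out(e)` for the edge `e = {u,v}`. -/
def OutEdge (lab : Sym2 V → L) (E : Set (Sym2 V)) (u v : V) : Set V :=
  OutSet lab E u (lab s(u, v)) ∪ OutSet lab E v (lab s(u, v))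

variable {α β : Type}

/-- In a bi-clique, `b` is the earliest neighbor `π⁻(a)` of `a ∈ A`. -/
def IsEarliestNbrA (lab : Sym2 (α ⊕ β) → L) (a : α) (b : β) : Prop :=
  ∀ b' : β, lab s(Sum.inl a, Sum.inr b) ≤ lab s(Sum.inl a, Sum.inr b')

/-- In a bi-clique, `a` is the earliest neighbor `π⁻(b)` of `b ∈ B`. -/
def IsEarliestNbrB (lab : Sym2 (α ⊕ β) → L) (b : β) (a : α) : Prop :=
  ∀ a' : α, lab s(Sum.inl a, Sum.inr b) ≤ lab s(Sum.inl a', Sum.inr b)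

/-- In a bi-clique, `b` is the latest neighbor `π⁺(a)` of `a ∈ A`. -/
def IsLatestNbrA (lab : Sym2 (α ⊕ β) → L) (a : α) (b : β) : Prop :=
  ∀ b' : β, lab s(Sum.inl a, Sum.inr b') ≤ lab s(Sum.inl a, Sum.inr b)

/-- In a bi-clique, `a` is the latest neighbor `π⁺(b)` of `b ∈ B`. -/
def IsLatestNbrB (lab : Sym2 (α ⊕ β) → L) (b : β) (a : α) : Prop :=
  ∀ a' : α, lab s(Sum.inl a', Sum.inr b) ≤ lab s(Sum.inl a, Sum.inr b)

/-- The bi-clique is extremally matched: both the set `M⁻` of earliest edges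
and the set `M⁺` of latest edges form perfect matchings, i.e. the earliest-
(resp. latest-) neighbor maps of the two sides are mutually inverse. -/
def ExtremallyMatched (lab : Sym2 (α ⊕ β) → L) : Prop :=
  (∃ (f : α → β) (g : β → α),
    (∀ a, IsEarliestNbrA lab a (f a)) ∧ (∀ b, IsEarliestNbrB lab b (g b)) ∧
    (∀ a, g (f a) = a) ∧ (∀ b, f (g b) = b)) ∧
  (∃ (f : α → β) (g : β → α),
    (∀ a, IsLatestNbrA lab a (f a)) ∧ (∀ b, IsLatestNbrB lab b (g b)) ∧
    (∀ a, g (f a) = a) ∧ (∀ b, f (g b) = b))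

/-- `a ∈ A` is dismountable: there is `a' ≠ a` with
`λ({a, π⁻(a')}) ≤ λ({a', π⁻(a')})`. -/
def DismountableA (lab : Sym2 (α ⊕ β) → L) (a : α) : Prop :=
  ∃ (a' : α) (b : β), a' ≠ a ∧ IsEarliestNbrA lab a' b ∧
    lab s(Sum.inl a, Sum.inr b) ≤ lab s(Sum.inl a', Sum.inr b)

/-- `b ∈ B` is dismountable: there is `b' ≠ b` with
`λ({b', π⁺(b')}) ≤ λ({b, π⁺(b')})`. -/
def DismountableB (lab : Sym2 (α ⊕ β) → L) (b : β) : Prop :=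
  ∃ (b' : β) (a : α), b' ≠ b ∧ IsLatestNbrB lab b' a ∧
    lab s(Sum.inl a, Sum.inr b') ≤ lab s(Sum.inl a, Sum.inr b)

/-- The edge `{a', b'}` is `e`-reverted for `e = {a,b}`:
`λ({a', b}) ≤ λ({π⁺(b'), b})` or `λ({π⁻(a'), a}) ≤ λ({b', a})`. -/
def Reverted (lab : Sym2 (α ⊕ β) → L) (a : α) (b : β) (a' : α) (b' : β) : Prop :=
  (∃ a'' : α, IsLatestNbrB lab b' a'' ∧
    lab s(Sum.inl a', Sum.inr b) ≤ lab s(Sum.inl a'', Sum.inr b)) ∨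
  (∃ b'' : β, IsEarliestNbrA lab a' b'' ∧
    lab s(Sum.inl a, Sum.inr b'') ≤ lab s(Sum.inl a, Sum.inr b'))

/-- `M(e)`: the set of edges of the bi-clique that are *not* `e`-reverted,
for `e = {a,b}`. -/
def MSet (lab : Sym2 (α ⊕ β) → L) (a : α) (b : β) : Set (Sym2 (α ⊕ β)) :=
  {e | ∃ (a' : α) (b' : β), e = s(Sum.inl a', Sum.inr b') ∧ ¬ Reverted lab a b a' b'}

/-- `ind_{a}({a,b})`: the (1-based) rank of the edge `{a,b}` among the edges
incident to `a ∈ A`, ordered increasingly by label. -/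
def indA [Fintype β] (lab : Sym2 (α ⊕ β) → ℕ) (a : α) (b : β) : ℕ :=
  (Finset.univ.filter fun b' : β =>
    lab s(Sum.inl a, Sum.inr b') ≤ lab s(Sum.inl a, Sum.inr b)).card

/-- `ind_{b}({a,b})`: the (1-based) rank of the edge `{a,b}` among the edges
incident to `b ∈ B`, ordered increasingly by label. -/
def indB [Fintype α] (lab : Sym2 (α ⊕ β) → ℕ) (a : α) (b : β) : ℕ :=
  (Finset.univ.filter fun a' : α =>
    lab s(Sum.inl a', Sum.inr b) ≤ lab s(Sum.inl a, Sum.inr b)).card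

/-- Underlying symmetric label function of the shifted matching graph `SM_n`:
the edge `{a_i, b_j}` gets label `(j - i) mod n`. -/
def smFun (n : ℕ) : (Fin n ⊕ Fin n) → (Fin n ⊕ Fin n) → ℕ
  | Sum.inl i, Sum.inr j => (n + (j : ℕ) - (i : ℕ)) % n
  | Sum.inr j, Sum.inl i => (n + (j : ℕ) - (i : ℕ)) % n
  | _, _ => 0

theorem smFun_symm (n : ℕ) : ∀ x y, smFun n x y = smFun n y x := by
  rintro (i | i) (j | j) <;> rfl

/-- The labeling of the shifted matching graph `SM_n`. -/
def smLab (n : ℕ) : Sym2 (Fin n ⊕ Fin n) → ℕ :=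
  Sym2.lift ⟨smFun n, smFun_symm n⟩

end TS

namespace TS

variable {V : Type} {L : Type} [LinearOrder L]

lemma pathEdges_cons_cons' (x y : V) (l : List V) :
    pathEdges (x :: y :: l) = s(x, y) :: pathEdges (y :: l) := rfl

lemma pathEdges_tail (p : List V) : pathEdges p.tail = (pathEdges p).tail := by
  match p with
  | [] => rfl
  | [x] => rfl
  | x :: y :: l => rfl

lemma pathEdges_append (p : List V) (x : V) (q : List V) :
    pathEdges (p ++ x :: q) = pathEdges (p ++ [x]) ++ pathEdges (x :: q) := by
  induction p with
  | nil => simp [pathEdges]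
  | cons a p ih =>
    cases p with
    | nil => rfl
    | cons b p' =>
      simp only [List.cons_append, pathEdges_cons_cons']
      rw [← List.cons_append, ih]
      rfl

lemma pathEdges_concat (q : List V) (z x : V) (h : q.getLast? = some z) :
    pathEdges (q ++ [x]) = pathEdges q ++ [s(z, x)] := by
  have hq : q ≠ [] := by rintro rfl; simp at h
  have hz : q.getLast hq = z := by
    rw [List.getLast?_eq_getLast hq, Option.some_inj] at h; exact h
  conv_lhs => rw [← List.dropLast_append_getLast hq, hz, List.append_assoc, List.singleton_append]
  rw [pathEdges_append, ← hz, List.dropLast_append_getLast hq]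
  rfl

lemma pathEdges_reverse (p : List V) : pathEdges p.reverse = (pathEdges p).reverse := by
  induction p with
  | nil => rfl
  | cons x p ih =>
    cases p with
    | nil => rfl
    | cons y l =>
      have h : (y :: l).reverse.getLast? = some y := by
        rw [List.getLast?_reverse]; rfl
      rw [List.reverse_cons, pathEdges_concat _ _ _ h, ih, pathEdges_cons_cons',
        List.reverse_cons, Sym2.eq_swap]

lemma IsTemporalPath.mono {lab : Sym2 V → L} {S S' : Set (Sym2 V)} {p : List V}
    (h : IsTemporalPath lab S p) (hS : S ⊆ S') : IsTemporalPath lab S' p :=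
  ⟨h.1, fun e he => hS (h.2.1 e he), h.2.2⟩

lemma IsTemporalPath.tail' {lab : Sym2 V → L} {S : Set (Sym2 V)} {p : List V}
    (h : IsTemporalPath lab S p) (hp : p.tail ≠ []) : IsTemporalPath lab S p.tail :=
  ⟨hp, fun e he => h.2.1 e (by rw [pathEdges_tail] at he; exact List.mem_of_mem_tail he),
   by rw [pathEdges_tail]; exact h.2.2.tail⟩

lemma isTemporalPath_dual (lab : Sym2 V → L) (S : Set (Sym2 V)) (p : List V) :
    IsTemporalPath (fun e => OrderDual.toDual (lab e)) S p ↔ IsTemporalPath lab S p.reverse := by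
  unfold IsTemporalPath
  rw [pathEdges_reverse]
  constructor
  · rintro ⟨h1, h2, h3⟩
    refine ⟨by simpa using h1, fun e he => h2 e (by rw [List.mem_reverse] at he; exact he), ?_⟩
    exact List.isChain_reverse.2 h3
  · rintro ⟨h1, h2, h3⟩
    have h3 := List.isChain_reverse.1 h3
    exact ⟨by simpa using h1, fun e he => h2 e (by rw [List.mem_reverse]; exact he), h3⟩

lemma glue {lab : Sym2 V → L} {S : Set (Sym2 V)} {p q : List V} {x : V}
    (hp : IsTemporalPath lab S p) (hq : IsTemporalPath lab S q)
    (hpl : p.getLast? = some x) (hqh : q.head? = some x)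
    (hle : ∀ e ∈ pathEdges p, ∀ f ∈ pathEdges q, lab e ≤ lab f) :
    IsTemporalPath lab S (p ++ q.tail) ∧ (p ++ q.tail).head? = p.head? ∧
      (p ++ q.tail).getLast? = q.getLast? ∧
      pathEdges (p ++ q.tail) = pathEdges p ++ pathEdges q := by
  cases q with
  | nil => simp at hqh
  | cons c q' =>
    obtain rfl : x = c := by simpa using hqh.symm
    simp only [List.tail_cons]
    have hpne : p ≠ [] := hp.1
    have hx : p.dropLast ++ [x] = p := by
      have h1 := List.dropLast_append_getLast hpne
      rw [List.getLast?_eq_getLast hpne, Option.some_inj] at hpl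
      rw [hpl] at h1; exact h1
    have hsplit : p ++ q' = p.dropLast ++ x :: q' := by
      conv_lhs => rw [← hx]
      rw [List.append_assoc, List.singleton_append]
    have hPE : pathEdges (p ++ q') = pathEdges p ++ pathEdges (x :: q') := by
      rw [hsplit, pathEdges_append, hx]
    have hhead : (p ++ q').head? = p.head? := by
      cases p with
      | nil => exact absurd rfl hpne
      | cons a p0 => rfl
    have hlast : (p ++ q').getLast? = (x :: q').getLast? := by
      cases q' with
      | nil => simpa using hpl
      | cons d q'' =>
        rw [List.getLast?_append_of_ne_nil p (by simp), List.getLast?_cons_cons]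
    refine ⟨⟨by simp [hpne], ?_, ?_⟩, hhead, hlast, hPE⟩
    · intro e he
      rw [hPE] at he
      rcases List.mem_append.1 he with h | h
      · exact hp.2.1 e h
      · exact hq.2.1 e h
    · rw [hPE]
      refine hp.2.2.append hq.2.2 ?_
      intro e he f hf
      exact hle e (List.mem_of_mem_getLast? he) f (List.mem_of_mem_head? hf)

def Wit (lab : Sym2 V → L) (E : Set (Sym2 V)) (T : Set V) (t : L) (u : V) (p : List V) : Prop :=
  p.head? = some u ∧ (∃ x ∈ T, p.getLast? = some x) ∧ IsTemporalPath lab E p ∧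
    ∀ e ∈ pathEdges p, lab e ≤ t

noncomputable def dfun {V L : Type} [ConditionallyCompleteLinearOrder L]
    (lab : Sym2 V → L) (E : Set (Sym2 V)) (T : Set V) (t : L) (u : V) : L :=
  sSup {ℓ | ∃ y q, Wit lab E T t u (u :: y :: q) ∧ ℓ = lab s(u, y)}

lemma forest {V L : Type} [Finite V] [ConditionallyCompleteLinearOrder L]
    (lab : Sym2 V → L) (E : Set (Sym2 V)) (hE : ∀ e ∈ E, ¬ e.IsDiag)
    (hinj : Set.InjOn lab E) (T : Set V) (t : L) :
    ∃ F : Set (Sym2 V), F ⊆ E ∧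
      F.ncard ≤ ({u : V | ∃ x ∈ T, ∃ p : List V, p.head? = some u ∧ p.getLast? = some x ∧
          IsTemporalPath lab E p ∧ ∀ e ∈ pathEdges p, lab e ≤ t} \ T).ncard ∧
      ∀ u ∈ {u : V | ∃ x ∈ T, ∃ p : List V, p.head? = some u ∧ p.getLast? = some x ∧
          IsTemporalPath lab E p ∧ ∀ e ∈ pathEdges p, lab e ≤ t},
        ∃ x ∈ T, ∃ p : List V, p.head? = some u ∧ p.getLast? = some x ∧
          IsTemporalPath lab F p ∧ ∀ e ∈ pathEdges p, lab e ≤ t := by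
  classical
  set I : Set V := {u : V | ∃ x ∈ T, ∃ p : List V, p.head? = some u ∧ p.getLast? = some x ∧
      IsTemporalPath lab E p ∧ ∀ e ∈ pathEdges p, lab e ≤ t} with hI
  have hIiff : ∀ u, u ∈ I ↔ ∃ p, Wit lab E T t u p := by
    intro u; rw [hI]; constructor
    · rintro ⟨x, hx, p, h1, h2, h3, h4⟩; exact ⟨p, h1, ⟨x, hx, h2⟩, h3, h4⟩
    · rintro ⟨p, h1, ⟨x, hx, h2⟩, h3, h4⟩; exact ⟨x, hx, p, h1, h2, h3, h4⟩
  set d : V → L := dfun lab E T t with hd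
  have hDfin : ∀ u : V,
      Set.Finite {ℓ | ∃ y q, Wit lab E T t u (u :: y :: q) ∧ ℓ = lab s(u, y)} := by
    intro u
    apply (Set.finite_range lab).subset
    rintro ℓ ⟨y, q, _, rfl⟩; exact ⟨s(u, y), rfl⟩
  have hWitCons : ∀ u p, u ∉ T → Wit lab E T t u p → ∃ y q, p = u :: y :: q := by
    intro u p huT hw
    obtain ⟨h1, ⟨x, hxT, h2⟩, h3, h4⟩ := hw
    cases p with
    | nil => simp at h1
    | cons a p0 =>
      obtain rfl : u = a := by simpa using h1.symm
      cases p0 with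
      | nil =>
        have hxu : u = x := by simpa using h2
        exact absurd (show u ∈ T by rw [hxu]; exact hxT) huT
      | cons y q => exact ⟨y, q, rfl⟩
  have hdle : ∀ u y q, Wit lab E T t u (u :: y :: q) → lab s(u, y) ≤ d u := by
    intro u y q hw
    exact le_csSup (hDfin u).bddAbove ⟨y, q, hw, rfl⟩
  have hdmem : ∀ u, u ∈ I → u ∉ T →
      ∃ y q, Wit lab E T t u (u :: y :: q) ∧ lab s(u, y) = d u := by
    intro u huI huT
    have hne : Set.Nonempty {ℓ | ∃ y q, Wit lab E T t u (u :: y :: q) ∧ ℓ = lab s(u, y)} := by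
      obtain ⟨p, hw⟩ := (hIiff u).1 huI
      obtain ⟨y, q, rfl⟩ := hWitCons u p huT hw
      exact ⟨lab s(u, y), y, q, hw, rfl⟩
    have hmem := hne.csSup_mem (hDfin u)
    obtain ⟨y, q, hw, hy⟩ := hmem
    exact ⟨y, q, hw, hy.symm⟩
  have step : ∀ u, u ∈ I → u ∉ T → ∃ y : V, s(u, y) ∈ E ∧ lab s(u, y) ≤ t ∧
      lab s(u, y) = d u ∧ (y ∈ T ∨ (y ∈ I ∧ y ∉ T ∧ d u < d y)) := by
    intro u huI huT
    set Len : Set ℕ := {n | ∃ y q, Wit lab E T t u (u :: y :: q) ∧ lab s(u, y) = d u ∧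
      (u :: y :: q).length = n} with hLen
    have hLne : Len.Nonempty := by
      obtain ⟨y, q, hw, hy⟩ := hdmem u huI huT
      exact ⟨_, y, q, hw, hy, rfl⟩
    obtain ⟨y, q, hw, hdy, hlen⟩ := Nat.sInf_mem hLne
    have he1E : s(u, y) ∈ E := hw.2.2.1.2.1 _ (by
      rw [pathEdges_cons_cons']; exact List.mem_cons_self)
    have he1t : lab s(u, y) ≤ t := hw.2.2.2 _ (by
      rw [pathEdges_cons_cons']; exact List.mem_cons_self)
    have huy : u ≠ y := by
      intro h; exact hE _ he1E (by rw [Sym2.mk_isDiag_iff]; exact h)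
    refine ⟨y, he1E, he1t, hdy, ?_⟩
    by_cases hyT : y ∈ T
    · exact Or.inl hyT
    · have hwy : Wit lab E T t y (y :: q) := by
        obtain ⟨h1, ⟨x, hxT, h2⟩, h3, h4⟩ := hw
        refine ⟨rfl, ⟨x, hxT, by rwa [List.getLast?_cons_cons] at h2⟩, h3.tail' (by simp), ?_⟩
        intro e he
        exact h4 e (by rw [pathEdges_cons_cons']; exact List.mem_cons_of_mem _ he)
      have hyI : y ∈ I := (hIiff y).2 ⟨_, hwy⟩
      refine Or.inr ⟨hyI, hyT, ?_⟩
      have hqne : q ≠ [] := by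
        rintro rfl
        obtain ⟨_, ⟨x, hxT, h2⟩, _, _⟩ := hw
        have hxy : y = x := by simpa using h2
        exact hyT (show y ∈ T by rw [hxy]; exact hxT)
      obtain ⟨z, q', rfl⟩ := List.exists_cons_of_ne_nil hqne
      have hch : lab s(u, y) ≤ lab s(y, z) := by
        have hc := hw.2.2.1.2.2
        rw [pathEdges_cons_cons', pathEdges_cons_cons'] at hc
        exact (List.isChain_cons_cons.1 hc).1
      have hdyz : lab s(y, z) ≤ d y := hdle y z q' hwy
      by_contra hnd
      push_neg at hnd
      have heq1 : lab s(y, z) = d u := le_antisymm (hdyz.trans hnd) (hdy ▸ hch)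
      have hyzE : s(y, z) ∈ E := hw.2.2.1.2.1 _ (by
        rw [pathEdges_cons_cons', pathEdges_cons_cons']
        exact List.mem_cons_of_mem _ (List.mem_cons_self))
      have heqe : s(y, z) = s(u, y) := hinj hyzE he1E (by rw [heq1, hdy])
      have hz : z = u := by
        rcases Sym2.eq_iff.1 heqe with ⟨h1, h2⟩ | ⟨h1, h2⟩
        · exact absurd h1.symm huy
        · exact h2
      have hz2 : u = z := hz.symm
      subst hz2
      have hq'ne : q' ≠ [] := by
        rintro rfl
        obtain ⟨_, ⟨x, hxT, h2⟩, _, _⟩ := hw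
        have hxu : u = x := by simpa using h2
        exact huT (show u ∈ T by rw [hxu]; exact hxT)
      obtain ⟨w, q'', rfl⟩ := List.exists_cons_of_ne_nil hq'ne
      have hw'' : Wit lab E T t u (u :: w :: q'') := by
        obtain ⟨h1, ⟨x, hxT, h2⟩, h3, h4⟩ := hw
        refine ⟨rfl, ⟨x, hxT, by
          rw [List.getLast?_cons_cons, List.getLast?_cons_cons] at h2; exact h2⟩,
          (h3.tail' (by simp)).tail' (by simp), ?_⟩
        intro e he
        apply h4
        rw [pathEdges_cons_cons', pathEdges_cons_cons']
        exact List.mem_cons_of_mem _ (List.mem_cons_of_mem _ he)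
      have hge : d u ≤ lab s(u, w) := by
        have hc := hw.2.2.1.2.2
        rw [pathEdges_cons_cons', pathEdges_cons_cons', pathEdges_cons_cons'] at hc
        have h23 : lab s(y, u) ≤ lab s(u, w) := (List.isChain_cons_cons.1 (List.isChain_cons_cons.1 hc).2).1
        calc d u = lab s(u, y) := hdy.symm
          _ = lab s(y, u) := by rw [Sym2.eq_swap]
          _ ≤ lab s(u, w) := h23
      have hfl : lab s(u, w) = d u := le_antisymm (hdle u w q'' hw'') hge
      have hmem2 : (u :: w :: q'').length ∈ Len := ⟨w, q'', hw'', hfl, rfl⟩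
      have hlenle := Nat.sInf_le hmem2
      rw [← hlen] at hlenle
      simp at hlenle
  choose! nxt hnxt using step
  refine ⟨(fun u => s(u, nxt u)) '' (I \ T), ?_, Set.ncard_image_le (Set.toFinite _), ?_⟩
  · rintro e ⟨u, ⟨huI, huT⟩, rfl⟩
    exact (hnxt u huI huT).1
  · set m : V → ℕ := fun u => ((I \ T) ∩ {w | d u < d w}).ncard with hm
    have key : ∀ n : ℕ, ∀ u, u ∈ I → m u = n →
        ∃ x ∈ T, ∃ p : List V, p.head? = some u ∧ p.getLast? = some x ∧
          IsTemporalPath lab ((fun u => s(u, nxt u)) '' (I \ T)) p ∧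
          (∀ e ∈ pathEdges p, lab e ≤ t) ∧ (∀ e ∈ pathEdges p, d u ≤ lab e) := by
      intro n
      induction n using Nat.strong_induction_on with
      | _ n ih =>
        intro u huI hmu
        by_cases huT : u ∈ T
        · refine ⟨u, huT, [u], rfl, rfl, ⟨by simp, ?_, ?_⟩, ?_, ?_⟩ <;>
            simp [pathEdges, List.Chain']
        · obtain ⟨heE, het, hdq, hy⟩ := hnxt u huI huT
          have hmemF : s(u, nxt u) ∈ (fun u => s(u, nxt u)) '' (I \ T) :=
            ⟨u, ⟨huI, huT⟩, rfl⟩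
          rcases hy with hyT | ⟨hyI, hyT, hdlt⟩
          · refine ⟨nxt u, hyT, [u, nxt u], rfl, rfl, ⟨by simp, ?_, ?_⟩, ?_, ?_⟩
            · intro e he
              rw [pathEdges_cons_cons'] at he
              rcases List.mem_cons.1 he with rfl | he
              · exact hmemF
              · simp [pathEdges] at he
            · rw [pathEdges_cons_cons']
              simp [pathEdges, List.Chain']
            · intro e he
              rw [pathEdges_cons_cons'] at he
              rcases List.mem_cons.1 he with rfl | he
              · exact het
              · simp [pathEdges] at he
            · intro e he
              rw [pathEdges_cons_cons'] at he
              rcases List.mem_cons.1 he with rfl | he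
              · exact hdq.ge
              · simp [pathEdges] at he
          · have hySu : nxt u ∈ (I \ T) ∩ {w | d u < d w} := ⟨⟨hyI, hyT⟩, hdlt⟩
            have hmlt : m (nxt u) < m u := by
              apply Set.ncard_lt_ncard _ (Set.toFinite _)
              refine ⟨fun w hw => ⟨hw.1, lt_trans hdlt hw.2⟩, fun hcon => ?_⟩
              exact lt_irrefl _ (hcon hySu).2
            obtain ⟨x, hxT, p', hh', hl', htp', hlab', hdge'⟩ :=
              ih (m (nxt u)) (by omega) (nxt u) hyI rfl
            obtain ⟨p'', rfl⟩ : ∃ p'', p' = nxt u :: p'' := by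
              cases p' with
              | nil => simp at hh'
              | cons c p'' =>
                obtain rfl : c = nxt u := by simpa using hh'
                exact ⟨p'', rfl⟩
            refine ⟨x, hxT, u :: nxt u :: p'', rfl,
              by rw [List.getLast?_cons_cons]; exact hl', ⟨by simp, ?_, ?_⟩, ?_, ?_⟩
            · intro e he
              rw [pathEdges_cons_cons'] at he
              rcases List.mem_cons.1 he with rfl | he
              · exact hmemF
              · exact htp'.2.1 e he
            · rw [pathEdges_cons_cons']
              refine List.isChain_cons.2 ⟨?_, htp'.2.2⟩
              intro f hf
              have hfm : f ∈ pathEdges (nxt u :: p'') := List.mem_of_mem_head? hf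
              calc lab s(u, nxt u) = d u := hdq
                _ ≤ d (nxt u) := le_of_lt hdlt
                _ ≤ lab f := hdge' f hfm
            · intro e he
              rw [pathEdges_cons_cons'] at he
              rcases List.mem_cons.1 he with rfl | he
              · exact het
              · exact hlab' e he
            · intro e he
              rw [pathEdges_cons_cons'] at he
              rcases List.mem_cons.1 he with rfl | he
              · exact hdq.ge
              · exact le_trans (le_of_lt hdlt) (hdge' e he)
    intro u huI
    obtain ⟨x, hxT, p, h1, h2, h3, h4, _⟩ := key (m u) u huI rfl
    exact ⟨x, hxT, p, h1, h2, h3, h4⟩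


/-- in a bi-clique with injective labeling, for every edge
`e = {a,b}` there is a set `F ⊆ A ⊗ B` of at most `|In(e)| + |Out(e)| − 3`
edges connecting every vertex of `In(e)` to every vertex of `Out(e)` by a
temporal path inside `F`. -/
theorem stmt12 {α β : Type} [Fintype α] [Fintype β]
    (lab : Sym2 (α ⊕ β) → ℕ) (hinj : Set.InjOn lab (bicliqueEdges α β))
    (a : α) (b : β) :
    ∃ F : Set (Sym2 (α ⊕ β)), F ⊆ bicliqueEdges α β ∧
      F.ncard ≤ (InEdge lab (bicliqueEdges α β) (Sum.inl a) (Sum.inr b)).ncard +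
        (OutEdge lab (bicliqueEdges α β) (Sum.inl a) (Sum.inr b)).ncard - 3 ∧
      ∀ u ∈ InEdge lab (bicliqueEdges α β) (Sum.inl a) (Sum.inr b),
        ∀ v ∈ OutEdge lab (bicliqueEdges α β) (Sum.inl a) (Sum.inr b),
          Reaches lab F u v := by
  classical
  have hE : ∀ e ∈ bicliqueEdges α β, ¬ e.IsDiag := by
    rintro e ⟨a', b', rfl⟩
    rw [Sym2.mk_isDiag_iff]
    simp
  have hAB : (Sum.inl a : α ⊕ β) ≠ Sum.inr b := by simp
  have heE : s((Sum.inl a : α ⊕ β), Sum.inr b) ∈ bicliqueEdges α β := ⟨a, b, rfl⟩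
  obtain ⟨F1, hF1E, hF1card, hF1reach⟩ :=
    forest lab (bicliqueEdges α β) hE hinj {Sum.inl a, Sum.inr b} (lab s(Sum.inl a, Sum.inr b))
  have hinj' : Set.InjOn (fun e => OrderDual.toDual (lab e)) (bicliqueEdges α β) :=
    fun e he f hf h => hinj he hf h
  obtain ⟨F2, hF2E, hF2card, hF2reach⟩ :=
    forest (fun e => OrderDual.toDual (lab e)) (bicliqueEdges α β) hE hinj'
      {Sum.inl a, Sum.inr b} (OrderDual.toDual (lab s(Sum.inl a, Sum.inr b)))
  have hIeq : {u : α ⊕ β | ∃ x ∈ ({Sum.inl a, Sum.inr b} : Set (α ⊕ β)), ∃ p : List (α ⊕ β),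
      p.head? = some u ∧ p.getLast? = some x ∧ IsTemporalPath lab (bicliqueEdges α β) p ∧
      ∀ e ∈ pathEdges p, lab e ≤ lab s(Sum.inl a, Sum.inr b)} =
      InEdge lab (bicliqueEdges α β) (Sum.inl a) (Sum.inr b) := by
    ext u
    constructor
    · rintro ⟨x, hx, p, h⟩
      rcases hx with rfl | rfl
      · exact Or.inl ⟨p, h⟩
      · exact Or.inr ⟨p, h⟩
    · rintro (⟨p, h⟩ | ⟨p, h⟩)
      · exact ⟨Sum.inl a, Or.inl rfl, p, h⟩
      · exact ⟨Sum.inr b, Or.inr rfl, p, h⟩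
  have hOeq : {u : α ⊕ β | ∃ x ∈ ({Sum.inl a, Sum.inr b} : Set (α ⊕ β)), ∃ p : List (α ⊕ β),
      p.head? = some u ∧ p.getLast? = some x ∧
      IsTemporalPath (fun e => OrderDual.toDual (lab e)) (bicliqueEdges α β) p ∧
      ∀ e ∈ pathEdges p, (fun e => OrderDual.toDual (lab e)) e ≤
        OrderDual.toDual (lab s(Sum.inl a, Sum.inr b))} =
      OutEdge lab (bicliqueEdges α β) (Sum.inl a) (Sum.inr b) := by
    ext w
    constructor
    · rintro ⟨x, hx, p, h1, h2, h3, h4⟩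
      have h3' : IsTemporalPath lab (bicliqueEdges α β) p.reverse :=
        (isTemporalPath_dual lab _ p).1 h3
      have hh : p.reverse.head? = some x := by rw [List.head?_reverse]; exact h2
      have hl : p.reverse.getLast? = some w := by rw [List.getLast?_reverse]; exact h1
      have h4' : ∀ e ∈ pathEdges p.reverse, lab s(Sum.inl a, Sum.inr b) ≤ lab e := by
        intro e he
        rw [pathEdges_reverse, List.mem_reverse] at he
        exact h4 e he
      rcases hx with rfl | rfl
      · exact Or.inl ⟨p.reverse, hh, hl, h3', h4'⟩
      · exact Or.inr ⟨p.reverse, hh, hl, h3', h4'⟩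
    · rintro (⟨p, h1, h2, h3, h4⟩ | ⟨p, h1, h2, h3, h4⟩)
      · refine ⟨Sum.inl a, Or.inl rfl, p.reverse, by rw [List.head?_reverse]; exact h2,
          by rw [List.getLast?_reverse]; exact h1, ?_, ?_⟩
        · refine (isTemporalPath_dual lab (bicliqueEdges α β) p.reverse).2 ?_
          rw [List.reverse_reverse]
          exact h3
        · intro e he
          rw [pathEdges_reverse, List.mem_reverse] at he
          exact h4 e he
      · refine ⟨Sum.inr b, Or.inr rfl, p.reverse, by rw [List.head?_reverse]; exact h2,
          by rw [List.getLast?_reverse]; exact h1, ?_, ?_⟩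
        · refine (isTemporalPath_dual lab (bicliqueEdges α β) p.reverse).2 ?_
          rw [List.reverse_reverse]
          exact h3
        · intro e he
          rw [pathEdges_reverse, List.mem_reverse] at he
          exact h4 e he
  have hsingle : ∀ (S : Set (Sym2 (α ⊕ β))) (v : α ⊕ β), IsTemporalPath lab S [v] :=
    fun S v => ⟨by simp, by simp [pathEdges], by simp [pathEdges, List.Chain']⟩
  have hTIn : ({Sum.inl a, Sum.inr b} : Set (α ⊕ β)) ⊆
      InEdge lab (bicliqueEdges α β) (Sum.inl a) (Sum.inr b) := by
    rintro x (rfl | rfl)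
    · exact Or.inl ⟨[Sum.inl a], rfl, rfl, hsingle _ _, by simp [pathEdges]⟩
    · exact Or.inr ⟨[Sum.inr b], rfl, rfl, hsingle _ _, by simp [pathEdges]⟩
  have hTOut : ({Sum.inl a, Sum.inr b} : Set (α ⊕ β)) ⊆
      OutEdge lab (bicliqueEdges α β) (Sum.inl a) (Sum.inr b) := by
    rintro x (rfl | rfl)
    · exact Or.inl ⟨[Sum.inl a], rfl, rfl, hsingle _ _, by simp [pathEdges]⟩
    · exact Or.inr ⟨[Sum.inr b], rfl, rfl, hsingle _ _, by simp [pathEdges]⟩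
  rw [hIeq] at hF1card
  rw [hOeq] at hF2card
  rw [Set.ncard_diff hTIn (Set.toFinite _), Set.ncard_pair hAB] at hF1card
  rw [Set.ncard_diff hTOut (Set.toFinite _), Set.ncard_pair hAB] at hF2card
  have h2I : 2 ≤ (InEdge lab (bicliqueEdges α β) (Sum.inl a) (Sum.inr b)).ncard := by
    rw [← Set.ncard_pair hAB]
    exact Set.ncard_le_ncard hTIn (Set.toFinite _)
  have h2O : 2 ≤ (OutEdge lab (bicliqueEdges α β) (Sum.inl a) (Sum.inr b)).ncard := by
    rw [← Set.ncard_pair hAB]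
    exact Set.ncard_le_ncard hTOut (Set.toFinite _)
  refine ⟨F1 ∪ F2 ∪ {s(Sum.inl a, Sum.inr b)}, ?_, ?_, ?_⟩
  · rintro e ((he | he) | he)
    · exact hF1E he
    · exact hF2E he
    · rcases he with rfl
      exact heE
  · have hc1 : (F1 ∪ F2 ∪ {s(Sum.inl a, Sum.inr b)}).ncard ≤
        (F1 ∪ F2).ncard + ({s(Sum.inl a, Sum.inr b)} : Set (Sym2 (α ⊕ β))).ncard :=
      Set.ncard_union_le _ _
    have hc2 : (F1 ∪ F2).ncard ≤ F1.ncard + F2.ncard := Set.ncard_union_le _ _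
    rw [Set.ncard_singleton] at hc1
    omega
  · intro u hu v hv
    rw [← hIeq] at hu
    obtain ⟨x, hxT, p1, hh1, hl1, htp1, hlab1⟩ := hF1reach u hu
    rw [← hOeq] at hv
    obtain ⟨y, hyT, p2', hh2', hl2', htp2', hlab2'⟩ := hF2reach v hv
    have htp2 : IsTemporalPath lab F2 p2'.reverse := (isTemporalPath_dual lab F2 p2').1 htp2'
    have hh2 : p2'.reverse.head? = some y := by rw [List.head?_reverse]; exact hl2'
    have hl2 : p2'.reverse.getLast? = some v := by rw [List.getLast?_reverse]; exact hh2'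
    have hlab2 : ∀ f ∈ pathEdges p2'.reverse, lab s(Sum.inl a, Sum.inr b) ≤ lab f := by
      intro f hf
      rw [pathEdges_reverse, List.mem_reverse] at hf
      exact hlab2' f hf
    have hsub1 : F1 ⊆ F1 ∪ F2 ∪ {s(Sum.inl a, Sum.inr b)} := fun e he => Or.inl (Or.inl he)
    have hsub2 : F2 ⊆ F1 ∪ F2 ∪ {s(Sum.inl a, Sum.inr b)} := fun e he => Or.inl (Or.inr he)
    have htp1F := IsTemporalPath.mono htp1 hsub1
    have htp2F := IsTemporalPath.mono htp2 hsub2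
    by_cases hxy : x = y
    · subst hxy
      obtain ⟨ht, hhd, hlt, _⟩ := glue htp1F htp2F hl1 hh2
        (fun e he f hf => le_trans (hlab1 e he) (hlab2 f hf))
      exact ⟨p1 ++ p2'.reverse.tail, by rw [hhd]; exact hh1, by rw [hlt]; exact hl2, ht⟩
    · have hxyE : s(x, y) = s(Sum.inl a, Sum.inr b) := by
        rcases hxT with rfl | rfl <;> rcases hyT with rfl | rfl
        · exact absurd rfl hxy
        · rfl
        · exact Sym2.eq_swap
        · exact absurd rfl hxy
      have htpm : IsTemporalPath lab (F1 ∪ F2 ∪ {s(Sum.inl a, Sum.inr b)}) [x, y] := by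
        refine ⟨by simp, ?_, ?_⟩
        · intro e he
          rw [pathEdges_cons_cons'] at he
          rcases List.mem_cons.1 he with rfl | he
          · exact Or.inr (by rw [hxyE]; rfl)
          · simp [pathEdges] at he
        · rw [pathEdges_cons_cons']
          simp [pathEdges, List.Chain']
      have hmidlab : ∀ f ∈ pathEdges [x, y], lab f = lab s(Sum.inl a, Sum.inr b) := by
        intro f hf
        rw [pathEdges_cons_cons'] at hf
        rcases List.mem_cons.1 hf with rfl | hf
        · rw [hxyE]
        · simp [pathEdges] at hf
      obtain ⟨ht1, hhd1, hlt1, hpe1⟩ := glue htp1F htpm hl1 rfl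
        (fun e he f hf => by rw [hmidlab f hf]; exact hlab1 e he)
      have hrlab : ∀ e ∈ pathEdges (p1 ++ [x, y].tail),
          lab e ≤ lab s(Sum.inl a, Sum.inr b) := by
        intro e he
        rw [hpe1] at he
        rcases List.mem_append.1 he with h | h
        · exact hlab1 e h
        · rw [hmidlab e h]
      obtain ⟨ht2, hhd2, hlt2, _⟩ := glue ht1 htp2F
        (by rw [hlt1]; rfl) hh2
        (fun e he f hf => le_trans (hrlab e he) (hlab2 f hf))
      refine ⟨(p1 ++ [x, y].tail) ++ p2'.reverse.tail, ?_, ?_, ht2⟩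
      · rw [hhd2, hhd1]; exact hh1
      · rw [hlt2]; exact hl2

end TS
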